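/- The complement in ℝ² of a set of three points in general position (not collinear) can be covered by three pairwise disjoint convex sets. -/

import Mathlib

/-- Convexity arithmetic for the first piece. -/
lemma aux0 (a c fx gx fy gy : ℝ) (ha : 0 < a) (hc : 0 < c) (hac : a + c = 1)
    (hx : fx < 0 ∨ (fx = 0 ∧ 0 < gx ∧ gx < 1))
    (hy : fy < 0 ∨ (fy = 0 ∧ 0 < gy ∧ gy < 1)) :
    a * fx + c * fy < 0 ∨
      (a * fx + c * fy = 0 ∧ 0 < a * gx + c * gy ∧ a * gx + c * gy < 1) := by
  rcases hx with h | ⟨h1, h2, h3⟩ <;> rcases hy with h' | ⟨h1', h2', h3'⟩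
  · left; nlinarith
  · left; nlinarith
  · left; nlinarith
  · right; refine ⟨by rw [h1, h1']; ring, by nlinarith, by nlinarith⟩

/-- Convexity arithmetic for the second piece. -/
lemma aux1 (a c fx gx fy gy : ℝ) (ha : 0 < a) (hc : 0 < c) (hac : a + c = 1)
    (hx : (0 ≤ fx ∧ gx < 0) ∨ (gx = 0 ∧ 0 < fx ∧ fx < 1))
    (hy : (0 ≤ fy ∧ gy < 0) ∨ (gy = 0 ∧ 0 < fy ∧ fy < 1)) :
    (0 ≤ a * fx + c * fy ∧ a * gx + c * gy < 0) ∨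
      (a * gx + c * gy = 0 ∧ 0 < a * fx + c * fy ∧ a * fx + c * fy < 1) := by
  rcases hx with ⟨h1, h2⟩ | ⟨h1, h2, h3⟩ <;> rcases hy with ⟨h1', h2'⟩ | ⟨h1', h2', h3'⟩
  · left; constructor <;> nlinarith
  · left; constructor <;> nlinarith
  · left; constructor <;> nlinarith
  · right; refine ⟨by rw [h1, h1']; ring, by nlinarith, by nlinarith⟩

/-- Convexity arithmetic for the third piece. -/
lemma aux2 (a c fx gx fy gy : ℝ) (ha : 0 < a) (hc : 0 < c) (hac : a + c = 1)
    (hx : (0 < fx ∧ 0 < gx) ∨ (gx = 0 ∧ 1 < fx) ∨ (fx = 0 ∧ 1 < gx))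
    (hy : (0 < fy ∧ 0 < gy) ∨ (gy = 0 ∧ 1 < fy) ∨ (fy = 0 ∧ 1 < gy)) :
    (0 < a * fx + c * fy ∧ 0 < a * gx + c * gy) ∨
      (a * gx + c * gy = 0 ∧ 1 < a * fx + c * fy) ∨
      (a * fx + c * fy = 0 ∧ 1 < a * gx + c * gy) := by
  rcases hx with ⟨h1, h2⟩ | ⟨h1, h2⟩ | ⟨h1, h2⟩ <;>
    rcases hy with ⟨h1', h2'⟩ | ⟨h1', h2'⟩ | ⟨h1', h2'⟩
  · left; constructor <;> nlinarith
  · left; constructor <;> nlinarith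
  · left; constructor <;> nlinarith
  · left; constructor <;> nlinarith
  · right; left; refine ⟨by rw [h1, h1']; ring, by nlinarith⟩
  · left; constructor <;> nlinarith
  · left; constructor <;> nlinarith
  · left; constructor <;> nlinarith
  · right; right; refine ⟨by rw [h1, h1']; ring, by nlinarith⟩

/-- The complement of three non-collinear points in the plane can be covered by
three pairwise disjoint convex sets. -/
theorem stmt_3 (p q r : ℝ × ℝ) (hgen : ¬ Collinear ℝ ({p, q, r} : Set (ℝ × ℝ))) :
    ∃ K : Fin 3 → Set (ℝ × ℝ),
      (∀ i, Convex ℝ (K i)) ∧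
      (∀ i j, i ≠ j → Disjoint (K i) (K j)) ∧
      (⋃ i, K i) = ({p, q, r} : Set (ℝ × ℝ))ᶜ := by
  -- Step 1: linear independence of `p - q` and `r - q`.
  have hli : LinearIndependent ℝ ![p - q, r - q] := by
    rw [LinearIndependent.pair_iff]
    intro s t hst
    by_contra hc
    apply hgen
    rw [collinear_iff_of_mem (show q ∈ ({p, q, r} : Set (ℝ × ℝ)) by simp)]
    rcases eq_or_ne s 0 with hs | hs
    · subst hs
      have ht : t ≠ 0 := fun h => hc ⟨rfl, h⟩
      have hr : r - q = 0 := by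
        have h0 : t • (r - q) = 0 := by simpa using hst
        rcases smul_eq_zero.mp h0 with h | h
        · exact absurd h ht
        · exact h
      refine ⟨p - q, ?_⟩
      intro x hx
      simp only [Set.mem_insert_iff, Set.mem_singleton_iff] at hx
      rcases hx with rfl | rfl | rfl
      · exact ⟨1, by simp [vadd_eq_add]⟩
      · exact ⟨0, by simp⟩
      · exact ⟨0, by simp [sub_eq_zero.mp hr]⟩
    · have h1 : s • (p - q) = (-t) • (r - q) := by
        rw [neg_smul]; exact eq_neg_of_add_eq_zero_left hst
      have h2 : p - q = (-t / s) • (r - q) := by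
        calc p - q = s⁻¹ • (s • (p - q)) := (inv_smul_smul₀ hs _).symm
          _ = s⁻¹ • ((-t) • (r - q)) := by rw [h1]
          _ = (-t / s) • (r - q) := by rw [smul_smul, show s⁻¹ * (-t) = -t / s by ring]
      refine ⟨r - q, ?_⟩
      intro x hx
      simp only [Set.mem_insert_iff, Set.mem_singleton_iff] at hx
      rcases hx with rfl | rfl | rfl
      · exact ⟨-t / s, by rw [vadd_eq_add]; rw [← h2]; abel⟩
      · exact ⟨0, by simp⟩
      · exact ⟨1, by simp [vadd_eq_add]⟩
  -- Step 2: build a basis and coordinates.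
  have hcard : Fintype.card (Fin 2) = Module.finrank ℝ (ℝ × ℝ) := by simp
  let b : Module.Basis (Fin 2) ℝ (ℝ × ℝ) := basisOfLinearIndependentOfCardEqFinrank hli hcard
  have hb : ⇑b = ![p - q, r - q] := coe_basisOfLinearIndependentOfCardEqFinrank hli hcard
  set f : ℝ × ℝ → ℝ := fun x => b.repr (x - q) 0 with hfdef
  set g : ℝ × ℝ → ℝ := fun x => b.repr (x - q) 1 with hgdef
  have hb0 : b 0 = p - q := by rw [show b 0 = (⇑b) 0 from rfl, hb]; simp
  have hb1 : b 1 = r - q := by rw [show b 1 = (⇑b) 1 from rfl, hb]; simp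
  have hfp : f p = 1 := by
    simp only [hfdef, ← hb0]
    rw [b.repr_self]; simp
  have hgp : g p = 0 := by
    simp only [hgdef, ← hb0]
    rw [b.repr_self]; simp
  have hfq : f q = 0 := by simp [hfdef]
  have hgq : g q = 0 := by simp [hgdef]
  have hfr : f r = 0 := by
    simp only [hfdef, ← hb1]
    rw [b.repr_self]; simp
  have hgr : g r = 1 := by
    simp only [hgdef, ← hb1]
    rw [b.repr_self]; simp
  -- affineness of the coordinates
  have hcombo : ∀ (a c : ℝ), a + c = 1 → ∀ x y : ℝ × ℝ,
      (a • x + c • y) - q = a • (x - q) + c • (y - q) := by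
    intro a c hac x y
    have : a • (x - q) + c • (y - q) = (a • x + c • y) - (a • q + c • q) := by
      rw [smul_sub, smul_sub]; abel
    rw [this, ← add_smul, hac, one_smul]
  have haff : ∀ (i : Fin 2) (a c : ℝ), a + c = 1 → ∀ x y : ℝ × ℝ,
      b.repr ((a • x + c • y) - q) i
        = a * b.repr (x - q) i + c * b.repr (y - q) i := by
    intro i a c hac x y
    rw [hcombo a c hac x y]
    simp [Finsupp.add_apply, Finsupp.smul_apply, smul_eq_mul]
  have haf : ∀ (a c : ℝ), a + c = 1 → ∀ x y : ℝ × ℝ,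
      f (a • x + c • y) = a * f x + c * f y := fun a c hac x y => haff 0 a c hac x y
  have hag : ∀ (a c : ℝ), a + c = 1 → ∀ x y : ℝ × ℝ,
      g (a • x + c • y) = a * g x + c * g y := fun a c hac x y => haff 1 a c hac x y
  -- injectivity
  have hinj : ∀ x y : ℝ × ℝ, f x = f y → g x = g y → x = y := by
    intro x y h0 h1
    have h2 : b.repr (x - q) = b.repr (y - q) := by
      ext i
      fin_cases i
      · exact h0
      · exact h1
    have h3 : x - q = y - q := b.repr.injective h2
    exact sub_left_injective h3
  -- the three convex pieces
  refine ⟨![{x | f x < 0 ∨ (f x = 0 ∧ 0 < g x ∧ g x < 1)},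
            {x | (0 ≤ f x ∧ g x < 0) ∨ (g x = 0 ∧ 0 < f x ∧ f x < 1)},
            {x | (0 < f x ∧ 0 < g x) ∨ (g x = 0 ∧ 1 < f x) ∨ (f x = 0 ∧ 1 < g x)}],
          ?_, ?_, ?_⟩
  · -- convexity
    intro i
    fin_cases i <;>
      simp only [Fin.zero_eta, Fin.mk_one, Fin.reduceFinMk, Matrix.cons_val_zero,
        Matrix.cons_val_one, Matrix.head_cons, Matrix.cons_val_two, Matrix.tail_cons]
    · intro x hx y hy a c ha hc hac
      rcases eq_or_lt_of_le ha with ha0 | ha0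
      · have hc1 : c = 1 := by linarith
        subst hc1; rw [← ha0, zero_smul, one_smul, zero_add]; exact hy
      rcases eq_or_lt_of_le hc with hc0 | hc0
      · have ha1 : a = 1 := by linarith
        subst ha1; rw [← hc0, zero_smul, one_smul, add_zero]; exact hx
      have hx' : f x < 0 ∨ (f x = 0 ∧ 0 < g x ∧ g x < 1) := hx
      have hy' : f y < 0 ∨ (f y = 0 ∧ 0 < g y ∧ g y < 1) := hy
      have h := aux0 a c (f x) (g x) (f y) (g y) ha0 hc0 hac hx' hy'
      rw [← haf a c hac x y, ← hag a c hac x y] at h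
      exact h
    · intro x hx y hy a c ha hc hac
      rcases eq_or_lt_of_le ha with ha0 | ha0
      · have hc1 : c = 1 := by linarith
        subst hc1; rw [← ha0, zero_smul, one_smul, zero_add]; exact hy
      rcases eq_or_lt_of_le hc with hc0 | hc0
      · have ha1 : a = 1 := by linarith
        subst ha1; rw [← hc0, zero_smul, one_smul, add_zero]; exact hx
      have hx' : (0 ≤ f x ∧ g x < 0) ∨ (g x = 0 ∧ 0 < f x ∧ f x < 1) := hx
      have hy' : (0 ≤ f y ∧ g y < 0) ∨ (g y = 0 ∧ 0 < f y ∧ f y < 1) := hy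
      have h := aux1 a c (f x) (g x) (f y) (g y) ha0 hc0 hac hx' hy'
      rw [← haf a c hac x y, ← hag a c hac x y] at h
      exact h
    · intro x hx y hy a c ha hc hac
      rcases eq_or_lt_of_le ha with ha0 | ha0
      · have hc1 : c = 1 := by linarith
        subst hc1; rw [← ha0, zero_smul, one_smul, zero_add]; exact hy
      rcases eq_or_lt_of_le hc with hc0 | hc0
      · have ha1 : a = 1 := by linarith
        subst ha1; rw [← hc0, zero_smul, one_smul, add_zero]; exact hx
      have hx' : (0 < f x ∧ 0 < g x) ∨ (g x = 0 ∧ 1 < f x) ∨ (f x = 0 ∧ 1 < g x) := hx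
      have hy' : (0 < f y ∧ 0 < g y) ∨ (g y = 0 ∧ 1 < f y) ∨ (f y = 0 ∧ 1 < g y) := hy
      have h := aux2 a c (f x) (g x) (f y) (g y) ha0 hc0 hac hx' hy'
      rw [← haf a c hac x y, ← hag a c hac x y] at h
      exact h
  · -- disjointness
    have dAB : Disjoint {x : ℝ × ℝ | f x < 0 ∨ (f x = 0 ∧ 0 < g x ∧ g x < 1)}
        {x : ℝ × ℝ | (0 ≤ f x ∧ g x < 0) ∨ (g x = 0 ∧ 0 < f x ∧ f x < 1)} := by
      rw [Set.disjoint_left]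
      rintro x (h | ⟨h1, h2, h3⟩) (⟨h1', h2'⟩ | ⟨h1', h2', h3'⟩) <;> linarith
    have dAC : Disjoint {x : ℝ × ℝ | f x < 0 ∨ (f x = 0 ∧ 0 < g x ∧ g x < 1)}
        {x : ℝ × ℝ | (0 < f x ∧ 0 < g x) ∨ (g x = 0 ∧ 1 < f x) ∨ (f x = 0 ∧ 1 < g x)} := by
      rw [Set.disjoint_left]
      rintro x (h | ⟨h1, h2, h3⟩) (⟨h1', h2'⟩ | ⟨h1', h2'⟩ | ⟨h1', h2'⟩) <;> linarith
    have dBC : Disjoint {x : ℝ × ℝ | (0 ≤ f x ∧ g x < 0) ∨ (g x = 0 ∧ 0 < f x ∧ f x < 1)}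
        {x : ℝ × ℝ | (0 < f x ∧ 0 < g x) ∨ (g x = 0 ∧ 1 < f x) ∨ (f x = 0 ∧ 1 < g x)} := by
      rw [Set.disjoint_left]
      rintro x (⟨h1, h2⟩ | ⟨h1, h2, h3⟩) (⟨h1', h2'⟩ | ⟨h1', h2'⟩ | ⟨h1', h2'⟩) <;> linarith
    intro i j hij
    fin_cases i <;> fin_cases j <;>
      (try simp only [Fin.zero_eta, Fin.mk_one, Fin.reduceFinMk, Matrix.cons_val_zero,
        Matrix.cons_val_one, Matrix.head_cons, Matrix.cons_val_two, Matrix.tail_cons]) <;>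
      first
        | exact absurd rfl hij
        | exact dAB
        | exact dAC
        | exact dBC
        | exact dAB.symm
        | exact dAC.symm
        | exact dBC.symm
  · -- coverage
    ext x
    simp only [Set.mem_iUnion, Set.mem_compl_iff, Set.mem_insert_iff,
      Set.mem_singleton_iff]
    constructor
    · rintro ⟨i, hi⟩ hx
      rcases hx with rfl | rfl | rfl <;> fin_cases i <;>
        (try simp only [Fin.zero_eta, Fin.mk_one, Fin.reduceFinMk, Matrix.cons_val_zero,
          Matrix.cons_val_one, Matrix.head_cons, Matrix.cons_val_two, Matrix.tail_cons,
          Set.mem_setOf_eq] at hi) <;>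
        rcases hi with h | h <;>
          first
            | linarith [h.1, h.2, hfp, hgp, hfq, hgq, hfr, hgr]
            | linarith [h.1, h.2.1, h.2.2, hfp, hgp, hfq, hgq, hfr, hgr]
            | linarith [h, hfp, hgp, hfq, hgq, hfr, hgr]
            | (rcases h with h | h <;>
                first
                  | linarith [h.1, h.2, hfp, hgp, hfq, hgq, hfr, hgr]
                  | linarith [h.1, h.2.1, h.2.2, hfp, hgp, hfq, hgq, hfr, hgr])
    · intro hx
      push_neg at hx
      obtain ⟨hxp, hxq, hxr⟩ := hx
      have hnp : ¬(f x = 1 ∧ g x = 0) := by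
        rintro ⟨h1, h2⟩
        exact hxp (hinj x p (by rw [h1, hfp]) (by rw [h2, hgp]))
      have hnq : ¬(f x = 0 ∧ g x = 0) := by
        rintro ⟨h1, h2⟩
        exact hxq (hinj x q (by rw [h1, hfq]) (by rw [h2, hgq]))
      have hnr : ¬(f x = 0 ∧ g x = 1) := by
        rintro ⟨h1, h2⟩
        exact hxr (hinj x r (by rw [h1, hfr]) (by rw [h2, hgr]))
      rcases lt_trichotomy (f x) 0 with hf0 | hf0 | hf0
      · exact ⟨0, Or.inl hf0⟩
      · rcases lt_trichotomy (g x) 0 with hg0 | hg0 | hg0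
        · exact ⟨1, Or.inl ⟨le_of_eq hf0.symm, hg0⟩⟩
        · exact absurd ⟨hf0, hg0⟩ hnq
        · rcases lt_trichotomy (g x) 1 with hg1 | hg1 | hg1
          · exact ⟨0, Or.inr ⟨hf0, hg0, hg1⟩⟩
          · exact absurd ⟨hf0, hg1⟩ hnr
          · exact ⟨2, Or.inr (Or.inr ⟨hf0, hg1⟩)⟩
      · rcases lt_trichotomy (g x) 0 with hg0 | hg0 | hg0
        · exact ⟨1, Or.inl ⟨le_of_lt hf0, hg0⟩⟩
        · rcases lt_trichotomy (f x) 1 with hf1 | hf1 | hf1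
          · exact ⟨1, Or.inr ⟨hg0, hf0, hf1⟩⟩
          · exact absurd ⟨hf1, hg0⟩ hnp
          · exact ⟨2, Or.inr (Or.inl ⟨hg0, hf1⟩)⟩
        · exact ⟨2, Or.inl ⟨hf0, hg0⟩⟩
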